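/- If the propagation network G is a tree, then no cell in an o-MEP is a ridge cell; that is, every cell has either a parent neighbor, a child neighbor, or an alien neighbor (a neighbor in a different propagation region), or is an isolated vertex with no neighbors — there is no cell all of whose neighbors are family neighbors. -/

import Mathlib

/-- If the propagation network `G` is a tree, then no cell of an o-MEP has a family
neighbor (hence there are no ridge cells). -/
theorem oMEP_tree_no_family_neighbor {N : Type*} [Fintype N] (G : SimpleGraph N)
    (htree : G.IsTree)
    (h : N → N)
    (hpio : ∀ i, h i = i ∨ G.Adj (h i) i)
    (hacyc : ∀ i k, 0 < k → h^[k] i = i → h i = i)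
    (src : N → N)
    (hsrc : ∀ i, (∃ k, h^[k] i = src i) ∧ h (src i) = src i) :
    ∀ i j, G.Adj i j → ¬(src i = src j ∧ h i ≠ j ∧ h j ≠ i) := by
  intro i j hadj hcontra
  obtain ⟨hs, hi, hj⟩ := hcontra
  -- Key: for any x and k, there is a walk from x to h^[k] x whose edges are h-steps.
  have key : ∀ (k : ℕ) (x : N), ∃ p : G.Walk x (h^[k] x),
      ∀ e ∈ p.edges, ∃ a, e = s(a, h a) := by
    intro k
    induction k with
    | zero => intro x; exact ⟨SimpleGraph.Walk.nil, by simp⟩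
    | succ k ih =>
      intro x
      obtain ⟨p, hp⟩ := ih x
      have hiter : h^[k + 1] x = h (h^[k] x) := Function.iterate_succ_apply' h k x
      rcases hpio (h^[k] x) with heq | hadj'
      · refine ⟨p.copy rfl (by rw [hiter, heq]), ?_⟩
        intro e he
        rw [SimpleGraph.Walk.edges_copy] at he
        exact hp e he
      · refine ⟨(p.concat hadj'.symm).copy rfl hiter.symm, ?_⟩
        intro e he
        rw [SimpleGraph.Walk.edges_copy, SimpleGraph.Walk.edges_concat] at he
        rw [List.concat_eq_append] at he
        rcases List.mem_append.mp he with h1 | h2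
        · exact hp e h1
        · exact ⟨h^[k] x, by simpa using h2⟩
  obtain ⟨⟨ki, hki⟩, -⟩ := hsrc i
  obtain ⟨⟨kj, hkj⟩, -⟩ := hsrc j
  obtain ⟨p, hp⟩ := key ki i
  obtain ⟨q, hq⟩ := key kj j
  -- walk from i to j via src i
  let p' : G.Walk i (src i) := p.copy rfl hki
  let q' : G.Walk (src i) j := ((q.copy rfl hkj).reverse).copy hs.symm rfl
  let w : G.Walk i j := p'.append q'
  -- every edge of a tree is a bridge
  have hbridge : G.IsBridge s(i, j) :=
    (SimpleGraph.isAcyclic_iff_forall_edge_isBridge.mp htree.2) (G.mem_edgeSet.mpr hadj)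
  have hmem : s(i, j) ∈ w.edges :=
    ((SimpleGraph.isBridge_iff_adj_and_forall_walk_mem_edges.mp hbridge)) w
  have : ∃ a, s(i, j) = s(a, h a) := by
    rw [show w.edges = p'.edges ++ q'.edges from SimpleGraph.Walk.edges_append _ _] at hmem
    rcases List.mem_append.mp hmem with h1 | h2
    · exact hp _ (by simpa [p', SimpleGraph.Walk.edges_copy] using h1)
    · have : s(i, j) ∈ q.edges := by
        have := h2
        simp only [q', SimpleGraph.Walk.edges_copy, SimpleGraph.Walk.edges_reverse] at this
        exact List.mem_reverse.mp this
      exact hq _ this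
  obtain ⟨a, ha⟩ := this
  rcases Sym2.eq_iff.mp ha with ⟨h1, h2⟩ | ⟨h1, h2⟩
  · exact hi (by rw [h1]; exact h2.symm)
  · exact hj (by rw [h2]; exact h1.symm)
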